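/- Let H = {h_1^-, h_2^-, h_1^+, h_2^+} with supp(h_i^-) = ℤ_{≤0} ∪ {i} and supp(h_i^+) = ℤ_{≥0} ∪ {−i}. Suppose a sequence (x_t) with x_1 = 0, x_2 = −1, x_3 = −2, and x_t = t − 3 for t ≥ 4 is given, and the first output hypothesis is ĥ_1 = h_1^-. Then this sequence is simultaneously a valid enumeration with replay (in the proper setting) for both targets h_1^+ and h_2^+: every term lies in supp(h_1^+) ∩ supp(h_2^+) except x_2, x_3, which lie in supp(ĥ_1), and the sequence enumerates both supp(h_1^+) and supp(h_2^+). -/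

import Mathlib

def h1m : Set ℤ := {z | z ≤ 0} ∪ {1}
def h1p : Set ℤ := {z | 0 ≤ z} ∪ {-1}
def h2p : Set ℤ := {z | 0 ≤ z} ∪ {-2}

/-- Hypothesis output by the proper generator `G` after the first `s` examples. -/
def OutH {X : Type*} (G : List X → Set X) (x : ℕ → X) (s : ℕ) : Set X :=
  G ((List.range s).map x)

/-- The adversarial sequence 0, −1, −2, 1, 2, 3, ... (0-indexed). -/
def xseq : ℕ → ℤ := fun t =>
  if t = 0 then 0 else if t = 1 then -1 else if t = 2 then -2 else (t : ℤ) - 2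

/-- If the proper generator's first output hypothesis is h_1^-, then the sequence
0, −1, −2, 1, 2, 3, ... is simultaneously a valid enumeration with replay (in the
proper setting) for both targets h_1^+ and h_2^+: every term lies in
supp(h_1^+) ∩ supp(h_2^+) except the second and third, which lie in supp(ĥ_1),
and the sequence enumerates both supports. -/
theorem statement10 (G : List ℤ → Set ℤ) (hfirst : G [(0 : ℤ)] = h1m) :
    (∀ t : ℕ, (t ≠ 1 ∧ t ≠ 2 → xseq t ∈ h1p ∩ h2p) ∧
        ((t = 1 ∨ t = 2) → xseq t ∈ OutH G xseq 1)) ∧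
    (∀ t, xseq t ∈ h1p ∨ ∃ s, 1 ≤ s ∧ s ≤ t ∧ xseq t ∈ OutH G xseq s) ∧
    (∀ t, xseq t ∈ h2p ∨ ∃ s, 1 ≤ s ∧ s ≤ t ∧ xseq t ∈ OutH G xseq s) ∧
    (∀ y ∈ h1p, ∃ t, xseq t = y) ∧
    (∀ y ∈ h2p, ∃ t, xseq t = y) := by

  have hout1 : OutH G xseq 1 = h1m := by
    simp [OutH, List.range_succ, xseq]; exact hfirst
  have hbig : ∀ t : ℕ, 3 ≤ t → xseq t = (t : ℤ) - 2 := by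
    intro t ht
    unfold xseq
    rw [if_neg (by omega), if_neg (by omega), if_neg (by omega)]
  refine ⟨?_, ?_, ?_, ?_, ?_⟩
  · intro t
    constructor
    · rintro ⟨h1, h2⟩
      match t, h1, h2 with
      | 0, _, _ => exact ⟨Or.inl (by norm_num [xseq]), Or.inl (by norm_num [xseq])⟩
      | (n+3), _, _ =>
        rw [hbig (n+3) (by omega)]
        constructor <;> exact Or.inl (by simp; omega)
    · rintro (rfl | rfl) <;> rw [hout1] <;> exact Or.inl (by norm_num [xseq])
  · intro t
    match t with
    | 0 => exact Or.inl (Or.inl (by norm_num [xseq]))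
    | 1 => exact Or.inl (Or.inr (by norm_num [xseq]))
    | 2 => exact Or.inr ⟨1, le_refl 1, by norm_num, by rw [hout1]; exact Or.inl (by norm_num [xseq])⟩
    | (n+3) => exact Or.inl (Or.inl (by rw [hbig (n+3) (by omega)]; simp; omega))
  · intro t
    match t with
    | 0 => exact Or.inl (Or.inl (by norm_num [xseq]))
    | 1 => exact Or.inr ⟨1, le_refl 1, by norm_num, by rw [hout1]; exact Or.inl (by norm_num [xseq])⟩
    | 2 => exact Or.inl (Or.inr (by norm_num [xseq]))
    | (n+3) => exact Or.inl (Or.inl (by rw [hbig (n+3) (by omega)]; simp; omega))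
  · rintro y (hy | rfl)
    · rcases eq_or_lt_of_le (show (0:ℤ) ≤ y from hy) with h | h
      · exact ⟨0, by norm_num [xseq]; omega⟩
      · refine ⟨(y + 2).toNat, ?_⟩
        rw [hbig _ (by omega)]
        omega
    · exact ⟨1, by norm_num [xseq]⟩
  · rintro y (hy | rfl)
    · rcases eq_or_lt_of_le (show (0:ℤ) ≤ y from hy) with h | h
      · exact ⟨0, by norm_num [xseq]; omega⟩
      · refine ⟨(y + 2).toNat, ?_⟩
        rw [hbig _ (by omega)]
        omega
    · exact ⟨2, by norm_num [xseq]⟩
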